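/- Let A, B be symmetric positive definite p×p matrices whose eigenvalues lie in [1/M, 1/m] for 0 < m ≤ M. Then (1/2)[trace(B⁻¹A) − p + log(det B/det A)] ≤ K ‖B − A‖_F² for a constant K depending only on m and M (e.g. K = (M/m)³ M² / 2). -/

import Mathlib

open Matrix

section KLAux

variable {p : ℕ}

lemma spectral_sub_smul {X : Matrix (Fin p) (Fin p) ℝ} (hX : X.IsHermitian) (c : ℝ) :
    X - c • 1 = (hX.eigenvectorUnitary : Matrix (Fin p) (Fin p) ℝ) *
        Matrix.diagonal (fun i => hX.eigenvalues i - c) *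
        (star hX.eigenvectorUnitary : Matrix (Fin p) (Fin p) ℝ) := by
  have hU : (hX.eigenvectorUnitary : Matrix (Fin p) (Fin p) ℝ) *
      (star hX.eigenvectorUnitary : Matrix (Fin p) (Fin p) ℝ) = 1 :=
    Matrix.mem_unitaryGroup_iff.mp hX.eigenvectorUnitary.2
  have hdiag : Matrix.diagonal (fun i => hX.eigenvalues i - c)
      = Matrix.diagonal (RCLike.ofReal ∘ hX.eigenvalues) - c • 1 := by
    rw [Matrix.smul_one_eq_diagonal, Matrix.diagonal_sub]
    rfl
  rw [hdiag, Matrix.mul_sub, Matrix.sub_mul]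
  rw [← Unitary.conjStarAlgAut_apply (S := ℝ), ← hX.spectral_theorem]
  congr 1
  rw [Matrix.mul_smul, Matrix.smul_mul, Matrix.mul_one, hU]

lemma spectral_smul_sub {X : Matrix (Fin p) (Fin p) ℝ} (hX : X.IsHermitian) (c : ℝ) :
    c • 1 - X = (hX.eigenvectorUnitary : Matrix (Fin p) (Fin p) ℝ) *
        Matrix.diagonal (fun i => c - hX.eigenvalues i) *
        (star hX.eigenvectorUnitary : Matrix (Fin p) (Fin p) ℝ) := by
  have h := congrArg Neg.neg (spectral_sub_smul hX c)
  simp only [neg_sub] at h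
  rw [h, ← Matrix.neg_mul, ← Matrix.mul_neg, Matrix.diagonal_neg]
  congr 2
  ext i j
  by_cases hij : i = j
  · simp only [hij, Matrix.diagonal_apply_eq]; ring
  · simp [Matrix.diagonal_apply_ne _ hij]

lemma psd_of_eig_le {X : Matrix (Fin p) (Fin p) ℝ} (hX : X.IsHermitian) {c : ℝ}
    (h : ∀ i, c ≤ hX.eigenvalues i) : (X - c • 1).PosSemidef := by
  rw [spectral_sub_smul hX c]
  have : (Matrix.diagonal (fun i => hX.eigenvalues i - c)).PosSemidef :=
    Matrix.posSemidef_diagonal_iff.mpr fun i => by simpa using h i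
  simpa [Matrix.star_eq_conjTranspose] using
    this.mul_mul_conjTranspose_same (hX.eigenvectorUnitary : Matrix (Fin p) (Fin p) ℝ)

lemma psd_of_le_eig {X : Matrix (Fin p) (Fin p) ℝ} (hX : X.IsHermitian) {c : ℝ}
    (h : ∀ i, hX.eigenvalues i ≤ c) : (c • 1 - X).PosSemidef := by
  rw [spectral_smul_sub hX c]
  have : (Matrix.diagonal (fun i => c - hX.eigenvalues i)).PosSemidef :=
    Matrix.posSemidef_diagonal_iff.mpr fun i => by simpa using h i
  simpa [Matrix.star_eq_conjTranspose] using
    this.mul_mul_conjTranspose_same (hX.eigenvectorUnitary : Matrix (Fin p) (Fin p) ℝ)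

lemma eig_ge_of_psd {X : Matrix (Fin p) (Fin p) ℝ} (hX : X.IsHermitian) {c : ℝ}
    (h : (X - c • 1).PosSemidef) (i : Fin p) : c ≤ hX.eigenvalues i := by
  have hpsd : ((star hX.eigenvectorUnitary : Matrix (Fin p) (Fin p) ℝ) * (X - c • 1) *
      (hX.eigenvectorUnitary : Matrix (Fin p) (Fin p) ℝ)).PosSemidef := by
    simpa [Matrix.star_eq_conjTranspose] using
      h.conjTranspose_mul_mul_same (hX.eigenvectorUnitary : Matrix (Fin p) (Fin p) ℝ)
  have hU : (star hX.eigenvectorUnitary : Matrix (Fin p) (Fin p) ℝ) *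
      (hX.eigenvectorUnitary : Matrix (Fin p) (Fin p) ℝ) = 1 :=
    Matrix.mem_unitaryGroup_iff'.mp hX.eigenvectorUnitary.2
  have hkey : (star hX.eigenvectorUnitary : Matrix (Fin p) (Fin p) ℝ) * (X - c • 1) *
      (hX.eigenvectorUnitary : Matrix (Fin p) (Fin p) ℝ)
      = Matrix.diagonal (fun i => hX.eigenvalues i - c) := by
    have hd := hX.conjStarAlgAut_star_eigenvectorUnitary
    rw [Unitary.conjStarAlgAut_star_apply] at hd
    rw [Matrix.mul_sub, Matrix.sub_mul, hd,
      Matrix.mul_smul, Matrix.smul_mul, Matrix.mul_one, hU,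
      Matrix.smul_one_eq_diagonal, Matrix.diagonal_sub]
    rfl
  rw [hkey] at hpsd
  have := (Matrix.posSemidef_diagonal_iff.mp hpsd) i
  linarith [this]

lemma trace_eq_sum_eig {X : Matrix (Fin p) (Fin p) ℝ} (hX : X.IsHermitian) :
    X.trace = ∑ i, hX.eigenvalues i := by
  have hU : (star hX.eigenvectorUnitary : Matrix (Fin p) (Fin p) ℝ) *
      (hX.eigenvectorUnitary : Matrix (Fin p) (Fin p) ℝ) = 1 :=
    Matrix.mem_unitaryGroup_iff'.mp hX.eigenvectorUnitary.2
  conv_lhs => rw [hX.spectral_theorem, Unitary.conjStarAlgAut_apply]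
  rw [Matrix.trace_mul_cycle, hU, Matrix.one_mul, Matrix.trace_diagonal]
  rfl

lemma trace_sub_smul_sq {X : Matrix (Fin p) (Fin p) ℝ} (hX : X.IsHermitian) (c : ℝ) :
    ((X - c • 1) * (X - c • 1)).trace = ∑ i, (hX.eigenvalues i - c) ^ 2 := by
  have hU : (star hX.eigenvectorUnitary : Matrix (Fin p) (Fin p) ℝ) *
      (hX.eigenvectorUnitary : Matrix (Fin p) (Fin p) ℝ) = 1 :=
    Matrix.mem_unitaryGroup_iff'.mp hX.eigenvectorUnitary.2
  set U : Matrix (Fin p) (Fin p) ℝ := (hX.eigenvectorUnitary : Matrix (Fin p) (Fin p) ℝ)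
  set V : Matrix (Fin p) (Fin p) ℝ := (star hX.eigenvectorUnitary : Matrix (Fin p) (Fin p) ℝ)
  set D : Matrix (Fin p) (Fin p) ℝ := Matrix.diagonal (fun i => hX.eigenvalues i - c)
  have key : (X - c • 1) * (X - c • 1)
      = U * Matrix.diagonal (fun i => (hX.eigenvalues i - c) ^ 2) * V := by
    rw [spectral_sub_smul hX c]
    calc (U * D * V) * (U * D * V) = U * D * (V * U) * D * V := by
          simp only [Matrix.mul_assoc]
      _ = U * (D * D) * V := by rw [hU, Matrix.mul_one]; simp only [Matrix.mul_assoc]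
      _ = U * Matrix.diagonal (fun i => (hX.eigenvalues i - c) ^ 2) * V := by
          rw [Matrix.diagonal_mul_diagonal]
          have hfun : (fun i => (hX.eigenvalues i - c) * (hX.eigenvalues i - c))
              = fun i => (hX.eigenvalues i - c) ^ 2 := by
            funext i
            rw [pow_two]
          rw [hfun]
  rw [key, Matrix.trace_mul_cycle, hU, Matrix.one_mul, Matrix.trace_diagonal]

lemma psd_smul {X : Matrix (Fin p) (Fin p) ℝ} (hX : X.PosSemidef) {c : ℝ} (hc : 0 ≤ c) :
    (c • X).PosSemidef := by
  refine ⟨?_, fun x => ?_⟩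
  · unfold Matrix.IsHermitian
    rw [Matrix.conjTranspose_smul, hX.1.eq]
    simp
  · exact (hX.smul hc).2 x

lemma diagEntry_nonneg {X : Matrix (Fin p) (Fin p) ℝ} (hX : X.PosSemidef) (i : Fin p) :
    0 ≤ X i i := by
  exact hX.diag_nonneg

lemma trace_nonneg_psd {X : Matrix (Fin p) (Fin p) ℝ} (hX : X.PosSemidef) : 0 ≤ X.trace := by
  rw [Matrix.trace]
  exact Finset.sum_nonneg fun i _ => diagEntry_nonneg hX i

open scoped MatrixOrder in
lemma psd_sqrt_exists {X : Matrix (Fin p) (Fin p) ℝ} (hX : X.PosSemidef) :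
    ∃ R : Matrix (Fin p) (Fin p) ℝ, R.PosSemidef ∧ R * R = X :=
  ⟨CFC.sqrt X, (CFC.sqrt_nonneg X).posSemidef, CFC.sqrt_mul_sqrt_self X hX.nonneg⟩

lemma trace_mul_nonneg_psd {X Y : Matrix (Fin p) (Fin p) ℝ} (hX : X.PosSemidef)
    (hY : Y.PosSemidef) : 0 ≤ (X * Y).trace := by
  obtain ⟨R, hR, hs⟩ := psd_sqrt_exists hX
  have hsh : R.IsHermitian := hR.1
  have : (X * Y).trace = (R * Y * R).trace := by
    rw [Matrix.trace_mul_cycle, hs]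
  rw [this]
  have hpsd : (R * Y * R).PosSemidef := by
    have := hY.mul_mul_conjTranspose_same R
    rwa [hsh.eq] at this
  exact trace_nonneg_psd hpsd

lemma trace_mul_le_psd {X Y : Matrix (Fin p) (Fin p) ℝ} (hX : X.PosSemidef)
    {c : ℝ} (hY : (c • 1 - Y).PosSemidef) : (X * Y).trace ≤ c * X.trace := by
  have h := trace_mul_nonneg_psd hX hY
  have : X * (c • 1 - Y) = c • X - X * Y := by
    rw [Matrix.mul_sub, Matrix.mul_smul, Matrix.mul_one]
  rw [this, Matrix.trace_sub, Matrix.trace_smul] at h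
  simp only [smul_eq_mul] at h
  linarith

lemma scalar_kl_bound {x c : ℝ} (hc : 0 < c) (hcx : c ≤ x) :
    x - 1 - Real.log x ≤ c⁻¹ * (x - 1) ^ 2 := by
  have hx : 0 < x := lt_of_lt_of_le hc hcx
  have h1 : 1 - x⁻¹ ≤ Real.log x := Real.one_sub_inv_le_log_of_pos hx
  have h2 : x - 1 - Real.log x ≤ x - 1 - (1 - x⁻¹) := by linarith
  refine h2.trans ?_
  have hxinv : x⁻¹ * x = 1 := inv_mul_cancel₀ hx.ne'
  have hcinv : 0 < c⁻¹ := inv_pos.mpr hc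
  have key : x - 1 - (1 - x⁻¹) = x⁻¹ * (x - 1) ^ 2 := by
    field_simp
  rw [key]
  apply mul_le_mul_of_nonneg_right _ (sq_nonneg _)
  exact inv_anti₀ hc hcx

end KLAux

/-- The Frobenius norm of a matrix. -/
noncomputable def frob {p : ℕ} (A : Matrix (Fin p) (Fin p) ℝ) : ℝ :=
  Real.sqrt (∑ i, ∑ j, (A i j) ^ 2)

/-- If `A`, `B` are symmetric positive definite with eigenvalues in `[1/M, 1/m]`
(`0 < m ≤ M`), then `(1/2)[trace(B⁻¹A) − p + log(det B/det A)] ≤ K ‖B − A‖_F²`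
with `K = (M/m)³ M² / 2`. -/
theorem stmt_11 {p : ℕ} (A B : Matrix (Fin p) (Fin p) ℝ)
    (hApd : A.PosDef) (hBpd : B.PosDef)
    (hA : A.IsHermitian) (hB : B.IsHermitian)
    (m M : ℝ) (hm : 0 < m) (hmM : m ≤ M)
    (heigA : ∀ i, 1 / M ≤ hA.eigenvalues i ∧ hA.eigenvalues i ≤ 1 / m)
    (heigB : ∀ i, 1 / M ≤ hB.eigenvalues i ∧ hB.eigenvalues i ≤ 1 / m) :
    (1 / 2) * (Matrix.trace (B⁻¹ * A) - p + Real.log (B.det / A.det))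
      ≤ ((M / m) ^ 3 * M ^ 2 / 2) * (frob (B - A)) ^ 2 := by
  have hM : 0 < M := lt_of_lt_of_le hm hmM
  have hdetB : IsUnit B.det := isUnit_iff_ne_zero.mpr hBpd.det_pos.ne'
  obtain ⟨S, hS, hSS⟩ := psd_sqrt_exists hBpd.inv.posSemidef
  have hSh : S.IsHermitian := hS.1
  have hSBinv : S * B⁻¹ = B⁻¹ * S := by
    rw [← hSS, ← Matrix.mul_assoc]
  have hcomm : B * S = S * B := by
    calc B * S = B * S * (B⁻¹ * B) := by rw [Matrix.nonsing_inv_mul B hdetB, Matrix.mul_one]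
      _ = B * (S * B⁻¹) * B := by simp only [Matrix.mul_assoc]
      _ = B * (B⁻¹ * S) * B := by rw [hSBinv]
      _ = S * B := by rw [← Matrix.mul_assoc, Matrix.mul_nonsing_inv B hdetB, Matrix.one_mul]
  have hSBS : S * B * S = 1 := by
    rw [← hcomm, Matrix.mul_assoc, hSS, Matrix.mul_nonsing_inv B hdetB]
  set C : Matrix (Fin p) (Fin p) ℝ := A - B with hCdef
  have hC : C.IsHermitian := hA.sub hB
  set E : Matrix (Fin p) (Fin p) ℝ := S * A * S with hEdef
  have hE : E.IsHermitian := by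
    have := Matrix.isHermitian_mul_mul_conjTranspose S hA
    rwa [hSh.eq] at this
  -- eigenvalue lower bound for E
  have hABpsd : (A - (m / M) • B).PosSemidef := by
    have h1 : (A - (1 / M) • 1).PosSemidef := psd_of_eig_le hA fun i => (heigA i).1
    have h2 : ((1 / m) • 1 - B).PosSemidef := psd_of_le_eig hB fun i => (heigB i).2
    have heq : A - (m / M) • B = (A - (1 / M) • 1) + (m / M) • ((1 / m) • 1 - B) := by
      rw [smul_sub, smul_smul]
      have : m / M * (1 / m) = 1 / M := by field_simp
      rw [this]
      abel
    rw [heq]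
    exact h1.add (psd_smul h2 (by positivity))
  have hEpsd : (E - (m / M) • 1).PosSemidef := by
    have heq : S * (A - (m / M) • B) * S = E - (m / M) • 1 := by
      rw [Matrix.mul_sub, Matrix.sub_mul, Matrix.mul_smul, Matrix.smul_mul, hSBS]
    have := hABpsd.mul_mul_conjTranspose_same S
    rw [hSh.eq] at this
    rwa [heq] at this
  have hmu : ∀ i, m / M ≤ hE.eigenvalues i := eig_ge_of_psd hE hEpsd
  have hmupos : ∀ i, 0 < hE.eigenvalues i := fun i =>
    lt_of_lt_of_le (by positivity) (hmu i)
  -- B⁻¹ ≼ M • 1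
  have hBinvle : (M • (1 : Matrix (Fin p) (Fin p) ℝ) - B⁻¹).PosSemidef := by
    have h1 : (B - (1 / M) • 1).PosSemidef := psd_of_eig_le hB fun i => (heigB i).1
    have h2 : (M • B - 1).PosSemidef := by
      have hsm := psd_smul h1 hM.le
      have heq : M • (B - (1 / M) • (1 : Matrix (Fin p) (Fin p) ℝ)) = M • B - 1 := by
        rw [smul_sub, smul_smul]
        have : M * (1 / M) = 1 := by field_simp
        rw [this, one_smul]
      rwa [heq] at hsm
    have heq2 : S * (M • B - 1) * S = M • 1 - B⁻¹ := by
      rw [Matrix.mul_sub, Matrix.sub_mul, Matrix.mul_smul, Matrix.smul_mul, hSBS,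
        Matrix.mul_one, hSS]
    have := h2.mul_mul_conjTranspose_same S
    rw [hSh.eq] at this
    rwa [heq2] at this
  -- trace identity
  have htr1 : Matrix.trace (B⁻¹ * A) = E.trace := by
    calc Matrix.trace (B⁻¹ * A) = Matrix.trace (S * S * A) := by rw [hSS]
      _ = Matrix.trace (S * A * S) := (Matrix.trace_mul_cycle S A S).symm
      _ = E.trace := rfl
  -- determinant identity
  have hdetE : E.det = A.det * (B.det)⁻¹ := by
    have hss : S.det * S.det = (B.det)⁻¹ := by
      rw [← Matrix.det_mul, hSS, Matrix.det_nonsing_inv]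
      simp [Ring.inverse_eq_inv']
    rw [hEdef, Matrix.det_mul, Matrix.det_mul]
    linear_combination A.det * hss
  have hdA : (0 : ℝ) < A.det := hApd.det_pos
  have hdB : (0 : ℝ) < B.det := hBpd.det_pos
  have hlog : Real.log (B.det / A.det) = -Real.log E.det := by
    rw [hdetE, Real.log_mul hdA.ne' (inv_ne_zero hdB.ne'), Real.log_inv,
      Real.log_div hdB.ne' hdA.ne']
    ring
  have hdetprod : E.det = ∏ i, hE.eigenvalues i := by
    simpa using hE.det_eq_prod_eigenvalues
  have hlogprod : Real.log E.det = ∑ i, Real.log (hE.eigenvalues i) := by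
    rw [hdetprod, Real.log_prod fun i _ => (hmupos i).ne']
  -- inner quantity as a sum over eigenvalues
  have hsum : Matrix.trace (B⁻¹ * A) - p + Real.log (B.det / A.det)
      = ∑ i, (hE.eigenvalues i - 1 - Real.log (hE.eigenvalues i)) := by
    rw [htr1, trace_eq_sum_eig hE, hlog, hlogprod]
    have : ∑ i, (hE.eigenvalues i - 1 - Real.log (hE.eigenvalues i))
        = (∑ i, hE.eigenvalues i) - (p : ℝ) - ∑ i, Real.log (hE.eigenvalues i) := by
      rw [Finset.sum_sub_distrib, Finset.sum_sub_distrib, Finset.sum_const,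
        Finset.card_univ, Fintype.card_fin, nsmul_eq_mul, mul_one]
    rw [this]
    ring
  -- per-eigenvalue bound
  have hterm : ∀ i, hE.eigenvalues i - 1 - Real.log (hE.eigenvalues i)
      ≤ (M / m) * (hE.eigenvalues i - 1) ^ 2 := fun i => by
    have h := scalar_kl_bound (c := m / M) (by positivity) (hmu i)
    rwa [show (m / M)⁻¹ = M / m by rw [inv_div]] at h
  have hsum2 : ∑ i, (hE.eigenvalues i - 1 - Real.log (hE.eigenvalues i))
      ≤ (M / m) * ∑ i, (hE.eigenvalues i - 1) ^ 2 := by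
    rw [Finset.mul_sum]
    exact Finset.sum_le_sum fun i _ => hterm i
  -- trace of (E-1)^2
  have hE1 : S * C * S = E - 1 := by
    rw [hCdef, Matrix.mul_sub, Matrix.sub_mul, hSBS, hEdef]
  have htrsq : ∑ i, (hE.eigenvalues i - 1) ^ 2 = ((E - 1) * (E - 1)).trace := by
    have h := trace_sub_smul_sq hE 1
    rw [one_smul] at h
    exact h.symm
  -- bound trace((E-1)^2) by M^2 * trace(C*C)
  have htr2 : ((E - 1) * (E - 1)).trace = ((B⁻¹ * C) * (B⁻¹ * C)).trace := by
    rw [← hE1, ← hSS]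
    have e1 : (S * C * S) * (S * C * S) = (S * C * S * S * C) * S := by
      simp only [Matrix.mul_assoc]
    rw [e1, Matrix.trace_mul_comm]
    have e2 : S * (S * C * S * S * C) = S * S * C * (S * S * C) := by
      simp only [Matrix.mul_assoc]
    rw [e2]
  have hXpsd : (C * B⁻¹ * C).PosSemidef := by
    have heq : C * B⁻¹ * C = (C * S) * (C * S)ᴴ := by
      rw [Matrix.conjTranspose_mul, hSh.eq, hC.eq, ← hSS]
      simp only [Matrix.mul_assoc]
    rw [heq]
    exact Matrix.posSemidef_self_mul_conjTranspose (C * S)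
  have hCCpsd : (C * C).PosSemidef := by
    have heq : C * C = C * Cᴴ := by rw [hC.eq]
    rw [heq]
    exact Matrix.posSemidef_self_mul_conjTranspose C
  have step1 : ((B⁻¹ * C) * (B⁻¹ * C)).trace ≤ M * (C * B⁻¹ * C).trace := by
    have h := trace_mul_le_psd hXpsd hBinvle
    have e1 : (B⁻¹ * C) * (B⁻¹ * C) = B⁻¹ * (C * B⁻¹ * C) := by
      simp only [Matrix.mul_assoc]
    rw [e1, Matrix.trace_mul_comm]
    exact h
  have step2 : (C * B⁻¹ * C).trace ≤ M * (C * C).trace := by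
    have h := trace_mul_le_psd hCCpsd hBinvle
    rw [Matrix.trace_mul_cycle C B⁻¹ C]
    exact h
  have hCCnn : (0 : ℝ) ≤ (C * C).trace := trace_nonneg_psd hCCpsd
  have htrbound : ((E - 1) * (E - 1)).trace ≤ M ^ 2 * (C * C).trace := by
    rw [htr2]
    calc ((B⁻¹ * C) * (B⁻¹ * C)).trace ≤ M * (C * B⁻¹ * C).trace := step1
      _ ≤ M * (M * (C * C).trace) := mul_le_mul_of_nonneg_left step2 hM.le
      _ = M ^ 2 * (C * C).trace := by ring
  -- trace(C*C) = frob(B-A)^2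
  have hsym : ∀ i j, C j i = C i j := fun i j => by
    conv_lhs => rw [← hC.eq]
    simp [Matrix.conjTranspose_apply]
  have hCC : (C * C).trace = (frob (B - A)) ^ 2 := by
    have hs : (0 : ℝ) ≤ ∑ i, ∑ j, ((B - A) i j) ^ 2 := by positivity
    rw [frob, Real.sq_sqrt hs, Matrix.trace]
    apply Finset.sum_congr rfl
    intro i _
    have : Matrix.diag (C * C) i = ∑ j, C i j * C j i := Matrix.mul_apply
    rw [this]
    apply Finset.sum_congr rfl
    intro j _
    rw [hsym i j, hCdef]
    simp only [Matrix.sub_apply]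
    ring
  -- assemble
  set fr2 : ℝ := (frob (B - A)) ^ 2 with hfr2
  have hfr : (0 : ℝ) ≤ fr2 := sq_nonneg _
  have chain : Matrix.trace (B⁻¹ * A) - p + Real.log (B.det / A.det)
      ≤ (M / m) * (M ^ 2 * fr2) := by
    rw [hsum]
    calc ∑ i, (hE.eigenvalues i - 1 - Real.log (hE.eigenvalues i))
        ≤ (M / m) * ∑ i, (hE.eigenvalues i - 1) ^ 2 := hsum2
      _ = (M / m) * ((E - 1) * (E - 1)).trace := by rw [htrsq]
      _ ≤ (M / m) * (M ^ 2 * (C * C).trace) := by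
          apply mul_le_mul_of_nonneg_left htrbound (by positivity)
      _ = (M / m) * (M ^ 2 * fr2) := by rw [hCC]
  have h1le : (1 : ℝ) ≤ M / m := (one_le_div hm).mpr hmM
  have ht3 : M / m ≤ (M / m) ^ 3 := by
    have h2 : (1 : ℝ) ≤ (M / m) ^ 2 := one_le_pow₀ h1le
    calc M / m = (M / m) * 1 := (mul_one _).symm
      _ ≤ (M / m) * (M / m) ^ 2 := mul_le_mul_of_nonneg_left h2 (by positivity)
      _ = (M / m) ^ 3 := by ring
  have hstep : (M / m) * (M ^ 2 * fr2) ≤ (M / m) ^ 3 * (M ^ 2 * fr2) :=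
    mul_le_mul_of_nonneg_right ht3 (by positivity)
  calc (1 / 2) * (Matrix.trace (B⁻¹ * A) - ↑p + Real.log (B.det / A.det))
      ≤ (1 / 2) * ((M / m) * (M ^ 2 * fr2)) :=
        mul_le_mul_of_nonneg_left chain (by norm_num)
    _ ≤ (1 / 2) * ((M / m) ^ 3 * (M ^ 2 * fr2)) :=
        mul_le_mul_of_nonneg_left hstep (by norm_num)
    _ = ((M / m) ^ 3 * M ^ 2 / 2) * fr2 := by ring
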